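/- Let K be an invertible complex s×s matrix and μ Hermitian with μ > (1/2)(K K* − I) (strict positive definiteness of the difference) and μ ≥ (1/2)(I − K K*). Then K₁ = (sqrt(μ + (1/2)(KK* + I)))⁻¹ K satisfies 0 < K₁* K₁ < I, i.e., K₁* K₁ is positive definite and I − K₁* K₁ is positive definite. -/

import Mathlib

open Matrix
open scoped ComplexOrder

/-- The square root of a positive semidefinite matrix, as `Matrix.PosSemidef.sqrt` was defined
in Mathlib (December 2024); it has since been removed from Mathlib. -/
noncomputable def Matrix.PosSemidef.sqrt {n 𝕜 : Type*} [Fintype n] [DecidableEq n] [RCLike 𝕜]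
    {A : Matrix n n 𝕜} (hA : A.PosSemidef) : Matrix n n 𝕜 :=
  hA.1.eigenvectorUnitary.1 * diagonal ((↑) ∘ (hA.1.eigenvalues · |>.sqrt)) *
  (star hA.1.eigenvectorUnitary : Matrix n n 𝕜)

theorem Matrix.PosSemidef.sqrt_mul_self {n 𝕜 : Type*} [Fintype n] [DecidableEq n] [RCLike 𝕜]
    {A : Matrix n n 𝕜} (hA : A.PosSemidef) : hA.sqrt * hA.sqrt = A := by
  unfold Matrix.PosSemidef.sqrt
  conv_rhs => rw [hA.1.spectral_theorem, Unitary.conjStarAlgAut_apply]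
  have hu : (star hA.1.eigenvectorUnitary : Matrix n n 𝕜) * hA.1.eigenvectorUnitary = 1 :=
    Unitary.coe_star_mul_self _
  have hd : diagonal ((↑) ∘ (hA.1.eigenvalues · |>.sqrt)) *
      diagonal ((↑) ∘ (hA.1.eigenvalues · |>.sqrt)) =
      (diagonal (RCLike.ofReal ∘ hA.1.eigenvalues) : Matrix n n 𝕜) := by
    rw [diagonal_mul_diagonal]
    congr 1
    funext i
    simp only [Function.comp_apply]
    rw [← RCLike.ofReal_mul, Real.mul_self_sqrt (hA.eigenvalues_nonneg i)]
  rw [← hd]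
  simp only [Matrix.mul_assoc]
  rw [← Matrix.mul_assoc (star hA.1.eigenvectorUnitary : Matrix n n 𝕜), hu, Matrix.one_mul]

theorem Matrix.PosSemidef.posSemidef_sqrt {n 𝕜 : Type*} [Fintype n] [DecidableEq n] [RCLike 𝕜]
    {A : Matrix n n 𝕜} (hA : A.PosSemidef) : hA.sqrt.PosSemidef := by
  unfold Matrix.PosSemidef.sqrt
  rw [Matrix.star_eq_conjTranspose]
  apply Matrix.PosSemidef.mul_mul_conjTranspose_same
  rw [posSemidef_diagonal_iff]
  intro i
  simp only [Function.comp_apply, RCLike.ofReal_nonneg]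
  exact Real.sqrt_nonneg _

private lemma posDef_conj_aux {n : Type*} [Fintype n] [DecidableEq n]
    {A : Matrix n n ℂ} (hA : A.PosDef) {C : Matrix n n ℂ} (hC : IsUnit C) :
    (Cᴴ * A * C).PosDef := by
  refine Matrix.PosDef.of_dotProduct_mulVec_pos (Matrix.isHermitian_conjTranspose_mul_mul C hA.1) fun x hx => ?_
  have hCx : C *ᵥ x ≠ 0 := by
    intro h
    apply hx
    have hinj := Matrix.mulVec_injective_iff_isUnit.mpr hC
    have : C *ᵥ x = C *ᵥ 0 := by simpa using h
    exact hinj this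
  simpa only [star_mulVec, dotProduct_mulVec, vecMul_vecMul] using hA.dotProduct_mulVec_pos hCx

private lemma conjTranspose_mul_self_posDef {n : Type*} [Fintype n] [DecidableEq n]
    {A : Matrix n n ℂ} (hA : IsUnit A) : (Aᴴ * A).PosDef := by
  have := posDef_conj_aux (Matrix.PosDef.one (n := n) (R := ℂ)) hA
  rwa [Matrix.mul_one] at this

private lemma isUnit_conjTranspose_aux {n : Type*} [Fintype n] [DecidableEq n]
    {A : Matrix n n ℂ} (hA : IsUnit A) : IsUnit Aᴴ := by
  rw [Matrix.isUnit_iff_isUnit_det] at hA ⊢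
  rw [Matrix.det_conjTranspose]
  exact hA.star

private lemma flip_posDef_aux {n : Type*} [Fintype n] [DecidableEq n]
    {A : Matrix n n ℂ} (hA : IsUnit A) (h : (1 - A * Aᴴ).PosDef) :
    (1 - Aᴴ * A).PosDef := by
  have hAdet : IsUnit A.det := (Matrix.isUnit_iff_isUnit_det A).mp hA
  have hAHdet : IsUnit (Aᴴ).det := (Matrix.isUnit_iff_isUnit_det Aᴴ).mp (isUnit_conjTranspose_aux hA)
  have hB : (A * Aᴴ).PosDef := by
    have := conjTranspose_mul_self_posDef (isUnit_conjTranspose_aux hA)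
    rwa [Matrix.conjTranspose_conjTranspose] at this
  set R : Matrix n n ℂ := hB.posSemidef.sqrt with hRdef
  have hRR : R * R = A * Aᴴ := hB.posSemidef.sqrt_mul_self
  have hRH : Rᴴ = R := hB.posSemidef.posSemidef_sqrt.isHermitian
  have hRdet : IsUnit R.det := by
    have h1 : R.det * R.det = (A * Aᴴ).det := by rw [← Matrix.det_mul, hRR]
    have h2 : (A * Aᴴ).det ≠ 0 := hB.det_pos.ne'
    exact isUnit_iff_ne_zero.mpr (fun hz => h2 (by rw [← h1, hz, mul_zero]))
  have hRunit : IsUnit R := (Matrix.isUnit_iff_isUnit_det R).mpr hRdet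
  have hRinvH : (R⁻¹)ᴴ = R⁻¹ := by rw [Matrix.conjTranspose_nonsing_inv, hRH]
  have hRinvRinv : R⁻¹ * R⁻¹ = (Aᴴ)⁻¹ * A⁻¹ := by
    rw [← Matrix.mul_inv_rev, hRR, Matrix.mul_inv_rev]
  have hCunit : IsUnit (R⁻¹ * A) := ((Matrix.isUnit_nonsing_inv_iff (A := R)).mpr hRunit).mul hA
  have t1 : Aᴴ * R⁻¹ * (R⁻¹ * A) = 1 := by
    rw [Matrix.mul_assoc, ← Matrix.mul_assoc R⁻¹ R⁻¹ A, hRinvRinv,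
      Matrix.nonsing_inv_mul_cancel_right _ _ hAdet, Matrix.mul_nonsing_inv _ hAHdet]
  have t2 : Aᴴ * R⁻¹ * (A * Aᴴ) * R⁻¹ * A = Aᴴ * A := by
    rw [← hRR]
    simp only [Matrix.mul_assoc]

    rw [Matrix.nonsing_inv_mul_cancel_left _ _ hRdet,
      Matrix.mul_nonsing_inv_cancel_left _ _ hRdet]
  have hkey : (1 - Aᴴ * A : Matrix n n ℂ) = (R⁻¹ * A)ᴴ * (1 - A * Aᴴ) * (R⁻¹ * A) := by
    rw [Matrix.conjTranspose_mul, hRinvH, Matrix.mul_sub, Matrix.mul_one, Matrix.sub_mul,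
      t1, ← Matrix.mul_assoc (Aᴴ * R⁻¹ * (A * Aᴴ)), t2]
  rw [hkey]
  exact posDef_conj_aux h hCunit

theorem attenuator_strict_contraction
    {s : ℕ} (K μ : Matrix (Fin s) (Fin s) ℂ) (hK : IsUnit K) (hμ : μ.IsHermitian)
    (hstrict : (μ - (1/2 : ℂ) • (K * Kᴴ - 1)).PosDef)
    (h₂ : (μ - (1/2 : ℂ) • (1 - K * Kᴴ)).PosSemidef)
    (hpos : (μ + (1/2 : ℂ) • (K * Kᴴ + 1)).PosSemidef)
    (K₁ : Matrix (Fin s) (Fin s) ℂ) (hK₁ : K₁ = hpos.sqrt⁻¹ * K) :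
    (K₁ᴴ * K₁).PosDef ∧ (1 - K₁ᴴ * K₁).PosDef := by
  have hMeq : μ + (1/2 : ℂ) • (K * Kᴴ + 1) = (μ - (1/2 : ℂ) • (K * Kᴴ - 1)) + K * Kᴴ := by
    module
  have hM : (μ + (1/2 : ℂ) • (K * Kᴴ + 1)).PosDef := by
    rw [hMeq]
    exact hstrict.add_posSemidef (Matrix.posSemidef_self_mul_conjTranspose K)
  have hSS : hpos.sqrt * hpos.sqrt = μ + (1/2 : ℂ) • (K * Kᴴ + 1) := hpos.sqrt_mul_self
  have hSH : hpos.sqrtᴴ = hpos.sqrt := hpos.posSemidef_sqrt.isHermitian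
  have hSdet : IsUnit hpos.sqrt.det := by
    have h1 : hpos.sqrt.det * hpos.sqrt.det = (μ + (1/2 : ℂ) • (K * Kᴴ + 1)).det := by
      rw [← Matrix.det_mul, hSS]
    have h2 : (μ + (1/2 : ℂ) • (K * Kᴴ + 1)).det ≠ 0 := hM.det_pos.ne'
    exact isUnit_iff_ne_zero.mpr (fun hz => h2 (by rw [← h1, hz, mul_zero]))
  have hSunit : IsUnit hpos.sqrt := (Matrix.isUnit_iff_isUnit_det _).mpr hSdet
  have hSinvH : (hpos.sqrt⁻¹)ᴴ = hpos.sqrt⁻¹ := by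
    rw [Matrix.conjTranspose_nonsing_inv, hSH]
  have hSinvUnit : IsUnit hpos.sqrt⁻¹ := (Matrix.isUnit_nonsing_inv_iff).mpr hSunit
  have hK₁unit : IsUnit K₁ := by rw [hK₁]; exact hSinvUnit.mul hK
  refine ⟨conjTranspose_mul_self_posDef hK₁unit, ?_⟩
  apply flip_posDef_aux hK₁unit
  -- 1 - K₁ * K₁ᴴ = S⁻¹ * (M - K Kᴴ) * S⁻¹ is positive definite
  have e1 : hpos.sqrt⁻¹ * (hpos.sqrt * hpos.sqrt) * hpos.sqrt⁻¹ = 1 := by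
    rw [← Matrix.mul_assoc, Matrix.nonsing_inv_mul _ hSdet, Matrix.one_mul,
      Matrix.mul_nonsing_inv _ hSdet]
  rw [hSS] at e1
  have hZ : (1 - K₁ * K₁ᴴ : Matrix (Fin s) (Fin s) ℂ)
      = (hpos.sqrt⁻¹)ᴴ * ((μ - (1/2 : ℂ) • (K * Kᴴ - 1))) * hpos.sqrt⁻¹ := by
    have hY : (μ - (1/2 : ℂ) • (K * Kᴴ - 1))
        = (μ + (1/2 : ℂ) • (K * Kᴴ + 1)) - K * Kᴴ := by module
    rw [hSinvH, hY, Matrix.mul_sub, Matrix.sub_mul, e1, hK₁, Matrix.conjTranspose_mul, hSinvH]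
    congr 1
    simp only [Matrix.mul_assoc]
  rw [hZ]
  exact posDef_conj_aux hstrict hSinvUnit
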